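/- Let $T_k$ be the number of i.i.d. draws from $p=(p_1,\ldots,p_N)$ until $k$ distinct elements have been drawn. Then $P(T_k > n) = \sum_{A \subseteq H, |A| \le k-1} (-1)^{k-1-|A|} \binom{N-|A|-1}{k-1-|A|} p_A^n$, where $p_A = \sum_{i\in A} p_i$. -/

import Mathlib

open Finset

/-- The probability of an event `E` for `n` i.i.d. draws from the distribution `p`
on `{1, …, N}`: the sum of the product weights of the outcome sequences in `E`. -/
noncomputable def prob {N : ℕ} (p : Fin N → ℝ) {n : ℕ} (E : Set (Fin n → Fin N)) : ℝ :=
  ∑ ω : Fin n → Fin N, Set.indicator E (fun ω => ∏ i, p (ω i)) ω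

/-- The number of distinct values drawn, `Y_n`. -/
noncomputable def distinctCount {N n : ℕ} (ω : Fin n → Fin N) : ℕ :=
  (Finset.univ.image ω).card

/-- The number of distinct values among the first `m` draws, `Y_m`. -/
noncomputable def prefCount {N n : ℕ} (ω : Fin n → Fin N) (m : ℕ) : ℕ :=
  ((Finset.univ.filter (fun i : Fin n => (i : ℕ) < m)).image ω).card

lemma key_id : ∀ (m M : ℕ), m < M →
    ∑ t ∈ range (m+1), (-1:ℝ)^(m-t) * (Nat.choose M t) * (Nat.choose (M-1-t) (m-t)) = 1 := by
  intro m
  induction m with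
  | zero => intro M hM; simp
  | succ m ih =>
    intro M hM
    have hmM : m < M := Nat.lt_of_succ_lt hM
    have ihM := ih M hmM
    rw [Finset.sum_range_succ]
    have step : ∀ t ∈ range (m+1),
        (-1:ℝ)^(m+1-t) * (Nat.choose M t) * (Nat.choose (M-1-t) (m+1-t))
          = (-1:ℝ)^(m+1-t) * (Nat.choose M t) * (Nat.choose (M-t) (m+1-t))
            - (-1:ℝ)^(m+1-t) * (Nat.choose M t) * (Nat.choose (M-1-t) (m-t)) := by
      intro t ht
      rw [mem_range] at ht
      have ht' : t ≤ m := Nat.lt_succ_iff.mp ht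
      have h1 : M - t = (M - 1 - t) + 1 := by omega
      have h2 : m + 1 - t = (m - t) + 1 := by omega
      rw [h1, h2, Nat.choose_succ_succ]
      push_cast
      ring
    rw [Finset.sum_congr rfl step, Finset.sum_sub_distrib]
    have e2 : ∑ t ∈ range (m+1), (-1:ℝ)^(m+1-t) * (Nat.choose M t) * (Nat.choose (M-1-t) (m-t))
        = -1 := by
      have : ∑ t ∈ range (m+1), (-1:ℝ)^(m+1-t) * (Nat.choose M t) * (Nat.choose (M-1-t) (m-t))
          = -∑ t ∈ range (m+1), (-1:ℝ)^(m-t) * (Nat.choose M t) * (Nat.choose (M-1-t) (m-t)) := by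
        rw [← Finset.sum_neg_distrib]
        refine Finset.sum_congr rfl fun t ht => ?_
        rw [mem_range] at ht
        have h4 : m + 1 - t = (m - t) + 1 := by omega
        rw [h4]; ring
      rw [this, ihM]
    rw [e2]
    have e1 : (∑ t ∈ range (m+1), (-1:ℝ)^(m+1-t) * (Nat.choose M t) * (Nat.choose (M-t) (m+1-t)))
          + (-1:ℝ)^(m+1-(m+1)) * (Nat.choose M (m+1)) * (Nat.choose (M-1-(m+1)) (m+1-(m+1)))
        = ∑ t ∈ range (m+2), (-1:ℝ)^(m+1-t) * (Nat.choose M t) * (Nat.choose (M-t) (m+1-t)) := by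
      conv_rhs => rw [Finset.sum_range_succ]
      congr 1
      rw [Nat.sub_self]
      simp
    have e3 : ∑ t ∈ range (m+2), (-1:ℝ)^(m+1-t) * (Nat.choose M t) * (Nat.choose (M-t) (m+1-t))
        = 0 := by
      have : ∀ t ∈ range (m+2),
          (-1:ℝ)^(m+1-t) * (Nat.choose M t) * (Nat.choose (M-t) (m+1-t))
            = (-1:ℝ)^(m+1) * (Nat.choose M (m+1)) * ((-1:ℝ)^t * (Nat.choose (m+1) t)) := by
        intro t ht
        rw [mem_range] at ht
        have ht' : t ≤ m + 1 := Nat.lt_succ_iff.mp ht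
        have hc : (Nat.choose M (m+1)) * (Nat.choose (m+1) t)
            = (Nat.choose M t) * (Nat.choose (M-t) (m+1-t)) := Nat.choose_mul ht'
        have hsgn : (-1:ℝ)^(m+1-t) = (-1:ℝ)^(m+1) * (-1:ℝ)^t := by
          have h5 : (-1:ℝ)^(m+1-t) * (-1:ℝ)^t = (-1:ℝ)^(m+1) := by
            rw [← pow_add]; congr 1; omega
          have h6 : (-1:ℝ)^t * (-1:ℝ)^t = 1 := by
            rw [← pow_add, ← two_mul, pow_mul]; norm_num
          rw [← h5, mul_assoc, h6, mul_one]
        calc (-1:ℝ)^(m+1-t) * (Nat.choose M t) * (Nat.choose (M-t) (m+1-t))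
            = (-1:ℝ)^(m+1-t) * ((Nat.choose M t) * (Nat.choose (M-t) (m+1-t)) : ℕ) := by
              push_cast; ring
          _ = (-1:ℝ)^(m+1-t) * ((Nat.choose M (m+1)) * (Nat.choose (m+1) t) : ℕ) := by rw [← hc]
          _ = _ := by rw [hsgn]; push_cast; ring
      rw [Finset.sum_congr rfl this, ← Finset.mul_sum]
      have := Int.alternating_sum_range_choose_of_ne (n := m+1) (by omega)
      have hcast : (∑ t ∈ range (m+2), (-1:ℝ)^t * (Nat.choose (m+1) t)) = 0 := by
        have := congrArg (fun z : ℤ => (z : ℝ)) this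
        push_cast at this
        convert this using 2
      rw [hcast, mul_zero]
    rw [sub_add_eq_add_sub, e1, e3]
    ring

lemma ivt (f : ℕ → ℕ) (h0 : f 0 = 0) (hstep : ∀ m, f (m+1) ≤ f m + 1) :
    ∀ n k, k ≤ f n → ∃ m ≤ n, f m = k := by
  intro n
  induction n with
  | zero => intro k hk; exact ⟨0, le_refl 0, by omega⟩
  | succ n ih =>
    intro k hk
    by_cases h : k ≤ f n
    · obtain ⟨m, hm, hfm⟩ := ih k h
      exact ⟨m, by omega, hfm⟩
    · exact ⟨n+1, le_refl _, by have := hstep n; omega⟩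

lemma prefCount_zero {N n : ℕ} (ω : Fin n → Fin N) : prefCount ω 0 = 0 := by
  unfold prefCount
  simp

lemma prefCount_step {N n : ℕ} (ω : Fin n → Fin N) (m : ℕ) :
    prefCount ω (m+1) ≤ prefCount ω m + 1 := by
  classical
  unfold prefCount
  have hsub : (univ.filter (fun i : Fin n => (i:ℕ) < m+1))
      ⊆ (univ.filter (fun i : Fin n => (i:ℕ) < m)) ∪ (univ.filter (fun i : Fin n => (i:ℕ) = m)) := by
    intro i hi
    simp only [mem_filter, mem_union, mem_univ, true_and] at *
    omega
  calc ((univ.filter (fun i : Fin n => (i:ℕ) < m+1)).image ω).card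
      ≤ (((univ.filter (fun i : Fin n => (i:ℕ) < m)) ∪ (univ.filter (fun i : Fin n => (i:ℕ) = m))).image ω).card :=
        Finset.card_le_card (Finset.image_subset_image hsub)
    _ = (((univ.filter (fun i : Fin n => (i:ℕ) < m)).image ω) ∪ ((univ.filter (fun i : Fin n => (i:ℕ) = m)).image ω)).card := by
        rw [Finset.image_union]
    _ ≤ ((univ.filter (fun i : Fin n => (i:ℕ) < m)).image ω).card + ((univ.filter (fun i : Fin n => (i:ℕ) = m)).image ω).card :=
        Finset.card_union_le _ _
    _ ≤ ((univ.filter (fun i : Fin n => (i:ℕ) < m)).image ω).card + 1 := by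
        gcongr
        calc ((univ.filter (fun i : Fin n => (i:ℕ) = m)).image ω).card
            ≤ (univ.filter (fun i : Fin n => (i:ℕ) = m)).card := Finset.card_image_le
          _ ≤ 1 := by
              apply Finset.card_le_one.mpr
              intro a ha b hb
              simp only [mem_filter] at ha hb
              exact Fin.ext (by omega)

lemma prefCount_mono {N n : ℕ} (ω : Fin n → Fin N) {m m' : ℕ} (h : m ≤ m') :
    prefCount ω m ≤ prefCount ω m' := by
  classical
  unfold prefCount
  apply Finset.card_le_card
  apply Finset.image_subset_image
  intro i hi
  simp only [mem_filter, mem_univ, true_and] at *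
  omega

lemma prefCount_last {N n : ℕ} (ω : Fin n → Fin N) :
    prefCount ω n = (Finset.univ.image ω).card := by
  classical
  unfold prefCount
  congr 1
  ext i
  simp [i.isLt]

lemma event_iff {N n k : ℕ} (hk1 : 1 ≤ k) (ω : Fin n → Fin N) :
    (∀ m ≤ n, prefCount ω m ≠ k) ↔ (Finset.univ.image ω).card ≤ k - 1 := by
  constructor
  · intro h
    by_contra hc
    have hk : k ≤ (Finset.univ.image ω).card := by omega
    rw [← prefCount_last ω] at hk
    obtain ⟨m, hm, hfm⟩ := ivt (prefCount ω) (prefCount_zero ω) (prefCount_step ω) n k hk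
    exact h m hm hfm
  · intro h m hm hc
    have := prefCount_mono ω hm
    rw [prefCount_last ω, hc] at this
    omega

lemma coeff_sum {N : ℕ} (k : ℕ) (hk1 : 1 ≤ k) (hkN : k ≤ N) (S : Finset (Fin N))
    (hS : S.card ≤ k - 1) :
    ∑ A ∈ Finset.univ.powerset.filter (fun A : Finset (Fin N) => A.card ≤ k - 1),
      (if S ⊆ A then (-1:ℝ)^(k-1-A.card) * (Nat.choose (N-A.card-1) (k-1-A.card)) else 0) = 1 := by
  classical
  rw [← Finset.sum_filter]
  set s := S.card with hs
  have hsN : S.card ≤ N := Finset.card_le_card (Finset.subset_univ S) |>.trans (by simp)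
  -- reindex by A ↦ A \ S
  have hbij :
      ∑ A ∈ (Finset.univ.powerset.filter (fun A : Finset (Fin N) => A.card ≤ k - 1)).filter
          (fun A => S ⊆ A),
        ((-1:ℝ)^(k-1-A.card) * (Nat.choose (N-A.card-1) (k-1-A.card)))
      = ∑ B ∈ (Finset.univ \ S).powerset,
        (if B.card ≤ k - 1 - s then
          (-1:ℝ)^(k-1-s-B.card) * (Nat.choose (N-s-1-B.card) (k-1-s-B.card)) else 0) := by
    rw [← Finset.sum_filter]
    refine Finset.sum_nbij' (fun A => A \ S) (fun B => B ∪ S) ?_ ?_ ?_ ?_ ?_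
    · intro A hA
      simp only [Finset.mem_filter, Finset.mem_powerset] at *
      obtain ⟨⟨_, hcard⟩, hSA⟩ := hA
      refine ⟨Finset.sdiff_subset_sdiff (Finset.subset_univ A) (le_refl S), ?_⟩
      rw [Finset.card_sdiff_of_subset hSA]
      omega
    · intro B hB
      simp only [Finset.mem_filter, Finset.mem_powerset] at *
      obtain ⟨hBsub, hBcard⟩ := hB
      have hdisj : Disjoint B S := by
        intro x hx1 hx2
        intro y hy
        have h1 := hx1 hy
        have h2 := hx2 hy
        have := hBsub h1
        rw [Finset.mem_sdiff] at this
        exact absurd h2 this.2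
      refine ⟨⟨Finset.subset_univ _, ?_⟩, Finset.subset_union_right⟩
      rw [Finset.card_union_of_disjoint hdisj]
      omega
    · intro A hA
      simp only [Finset.mem_filter, Finset.mem_powerset] at hA
      exact Finset.sdiff_union_of_subset hA.2
    · intro B hB
      simp only [Finset.mem_filter, Finset.mem_powerset] at hB
      have hdisj : Disjoint B S := by
        intro x hx1 hx2
        intro y hy
        have := hB.1 (hx1 hy)
        rw [Finset.mem_sdiff] at this
        exact absurd (hx2 hy) this.2
      exact Finset.union_sdiff_cancel_right hdisj
    · intro A hA
      simp only [Finset.mem_filter, Finset.mem_powerset] at hA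
      have hcard : (A \ S).card = A.card - s := by rw [Finset.card_sdiff_of_subset hA.2]
      have hsA : s ≤ A.card := Finset.card_le_card hA.2
      rw [hcard]
      have e1 : k - 1 - s - (A.card - s) = k - 1 - A.card := by omega
      have e2 : N - s - 1 - (A.card - s) = N - A.card - 1 := by omega
      rw [e1, e2]
  rw [hbij]
  -- sum over powerset of a function of the card
  rw [Finset.sum_powerset_apply_card
    (fun c => if c ≤ k - 1 - s then
      (-1:ℝ)^(k-1-s-c) * (Nat.choose (N-s-1-c) (k-1-s-c)) else 0)]
  have hcardsd : (Finset.univ \ S).card = N - s := by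
    rw [Finset.card_sdiff_of_subset (Finset.subset_univ S)]
    simp [hs]
  rw [hcardsd]
  -- restrict the range
  have hrange : ∑ m ∈ range (N - s + 1), (N - s).choose m •
        (if m ≤ k - 1 - s then
          (-1:ℝ)^(k-1-s-m) * (Nat.choose (N-s-1-m) (k-1-s-m)) else 0)
      = ∑ m ∈ range (k - 1 - s + 1), (N - s).choose m •
        ((-1:ℝ)^(k-1-s-m) * (Nat.choose (N-s-1-m) (k-1-s-m))) := by
    simp_rw [smul_ite, smul_zero]
    rw [← Finset.sum_filter]
    have : (range (N - s + 1)).filter (fun m => m ≤ k - 1 - s) = range (k - 1 - s + 1) := by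
      ext m
      simp only [Finset.mem_filter, Finset.mem_range]
      omega
    rw [this]
  rw [hrange]
  have hfinal : ∑ m ∈ range (k - 1 - s + 1), (N - s).choose m •
        ((-1:ℝ)^(k-1-s-m) * (Nat.choose (N-s-1-m) (k-1-s-m)))
      = ∑ t ∈ range (k - 1 - s + 1),
        (-1:ℝ)^(k-1-s-t) * (Nat.choose (N-s) t) * (Nat.choose (N-s-1-t) (k-1-s-t)) := by
    refine Finset.sum_congr rfl fun m hm => ?_
    rw [nsmul_eq_mul]
    ring
  rw [hfinal]
  exact key_id (k - 1 - s) (N - s) (by omega)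

theorem stmt_12 (N n k : ℕ) (p : Fin N → ℝ) (hp : ∀ i, 0 ≤ p i) (hsum : ∑ i, p i = 1)
    (hk1 : 1 ≤ k) (hkN : k ≤ N) :
    prob p {ω : Fin n → Fin N | ∀ m ≤ n, prefCount ω m ≠ k}
      = ∑ A ∈ Finset.univ.powerset.filter (fun A : Finset (Fin N) => A.card ≤ k - 1),
          (-1 : ℝ) ^ (k - 1 - A.card) * (Nat.choose (N - A.card - 1) (k - 1 - A.card)) *
            (∑ i ∈ A, p i) ^ n := by
  classical
  -- expand the powers on the RHS
  have hpow : ∀ A : Finset (Fin N), (∑ i ∈ A, p i) ^ n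
      = ∑ ω : Fin n → Fin N, (if ∀ j, ω j ∈ A then ∏ j, p (ω j) else 0) := by
    intro A
    have h1 : (∑ i ∈ A, p i) ^ n = ∏ _j : Fin n, (∑ i ∈ A, p i) := by
      rw [Finset.prod_const, Finset.card_univ, Fintype.card_fin]
    rw [h1, Finset.prod_univ_sum (fun _ => A) (fun _ i => p i)]
    rw [← Finset.sum_filter]
    apply Finset.sum_congr
    · ext g
      simp [Fintype.mem_piFinset]
    · intros; rfl
  calc prob p {ω : Fin n → Fin N | ∀ m ≤ n, prefCount ω m ≠ k}
      = ∑ ω : Fin n → Fin N,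
          (if (Finset.univ.image ω).card ≤ k - 1 then ∏ j, p (ω j) else 0) := by
        unfold prob
        refine Finset.sum_congr rfl fun ω _ => ?_
        rw [Set.indicator_apply]
        congr 1
        simp only [Set.mem_setOf_eq, eq_iff_iff]
        exact event_iff hk1 ω
    _ = ∑ ω : Fin n → Fin N, (∏ j, p (ω j)) *
          (∑ A ∈ Finset.univ.powerset.filter (fun A : Finset (Fin N) => A.card ≤ k - 1),
            (if Finset.univ.image ω ⊆ A then
              (-1:ℝ)^(k-1-A.card) * (Nat.choose (N-A.card-1) (k-1-A.card)) else 0)) := by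
        refine Finset.sum_congr rfl fun ω _ => ?_
        by_cases h : (Finset.univ.image ω).card ≤ k - 1
        · rw [if_pos h, coeff_sum k hk1 hkN _ h, mul_one]
        · rw [if_neg h]
          have : ∀ A ∈ Finset.univ.powerset.filter
              (fun A : Finset (Fin N) => A.card ≤ k - 1),
              (if Finset.univ.image ω ⊆ A then
                (-1:ℝ)^(k-1-A.card) * (Nat.choose (N-A.card-1) (k-1-A.card)) else 0) = 0 := by
            intro A hA
            simp only [Finset.mem_filter, Finset.mem_powerset] at hA
            rw [if_neg]
            intro hsub
            exact h (le_trans (Finset.card_le_card hsub) hA.2)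
          rw [Finset.sum_congr rfl this, Finset.sum_const_zero, mul_zero]
    _ = ∑ A ∈ Finset.univ.powerset.filter (fun A : Finset (Fin N) => A.card ≤ k - 1),
          (-1 : ℝ) ^ (k - 1 - A.card) * (Nat.choose (N - A.card - 1) (k - 1 - A.card)) *
            (∑ i ∈ A, p i) ^ n := by
        simp_rw [Finset.mul_sum, mul_ite, mul_zero]
        rw [Finset.sum_comm]
        refine Finset.sum_congr rfl fun A hA => ?_
        rw [hpow A, Finset.mul_sum]
        refine Finset.sum_congr rfl fun ω _ => ?_
        have hcond : (Finset.univ.image ω ⊆ A) ↔ (∀ j, ω j ∈ A) := by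
          rw [Finset.image_subset_iff]
          simp
        by_cases h : ∀ j, ω j ∈ A
        · rw [if_pos (hcond.mpr h), if_pos h]; ring
        · rw [if_neg (fun hh => h (hcond.mp hh)), if_neg h, mul_zero]
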